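/- arXiv:1805.03811 — 7 statements merged into one kernel-verified Lean document; each statement's English description precedes it below -/
import Mathlib

section
/- Let λ, μ be real numbers with μ > 0 and λ + μ > 0. Let ξ¹, ξ² ∈ ℝ³ be unit vectors with ξ¹·ξ² ≠ 1, and let τ¹, τ² ∈ ℝ satisfy (τ¹)² = (τ²)² = λ + 2μ and τ¹τ² = λ + 2μ (so the covectors ζⁱ = (τⁱ, ξⁱ) are P-characteristic and lie on the same half of the light cone). Then for all a, b ∈ ℝ, if (aτ¹ + bτ²)² = (λ + 2μ)·|aξ¹ + bξ²|², then ab = 0. (In other words, no nontrivial linear combination of two transversal P-characteristic covectors is again P-characteristic: this is part (1) of the lemma on P–P interactions.) -/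
/-- Euclidean dot product on ℝ³. -/
def dot (x y : Fin 3 → ℝ) : ℝ := ∑ i, x i * y i

/-- No nontrivial linear combination of two transversal P-characteristic covectors
(lying on the same half of the light cone) is again P-characteristic. -/
theorem pp_interaction_no_P (lam mu : ℝ) (hmu : 0 < mu) (hlm : 0 < lam + mu)
    (ξ1 ξ2 : Fin 3 → ℝ) (hξ1 : dot ξ1 ξ1 = 1) (hξ2 : dot ξ2 ξ2 = 1)
    (hne : dot ξ1 ξ2 ≠ 1)
    (τ1 τ2 : ℝ) (hτ1 : τ1 ^ 2 = lam + 2 * mu) (hτ2 : τ2 ^ 2 = lam + 2 * mu)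
    (hτ12 : τ1 * τ2 = lam + 2 * mu) :
    ∀ a b : ℝ,
      (a * τ1 + b * τ2) ^ 2
        = (lam + 2 * mu) * dot (a • ξ1 + b • ξ2) (a • ξ1 + b • ξ2) →
      a * b = 0 := by
  intro a b h
  have hexp : dot (a • ξ1 + b • ξ2) (a • ξ1 + b • ξ2)
      = a ^ 2 * dot ξ1 ξ1 + 2 * (a * b) * dot ξ1 ξ2 + b ^ 2 * dot ξ2 ξ2 := by
    simp only [dot, Fin.sum_univ_three, Pi.add_apply, Pi.smul_apply, smul_eq_mul]
    ring
  rw [hexp, hξ1, hξ2] at h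
  have hkey : (lam + 2 * mu) * (2 * (a * b) * (1 - dot ξ1 ξ2)) = 0 := by
    linear_combination h - a ^ 2 * hτ1 - 2 * a * b * hτ12 - b ^ 2 * hτ2
  have hpos : 0 < lam + 2 * mu := by linarith
  rcases mul_eq_zero.1 hkey with h1 | h1
  · exact absurd h1 (ne_of_gt hpos)
  · rcases mul_eq_zero.1 h1 with h2 | h2
    · rcases mul_eq_zero.1 h2 with h3 | h3
      · norm_num at h3
      · exact h3
    · exact absurd (by linarith : dot ξ1 ξ2 = 1) hne
end

section
/- Let λ, μ be real numbers with μ > 0 and λ + μ > 0. Let ξ¹, ξ² ∈ ℝ³ be linearly independent unit vectors, and let τ¹, τ² ∈ ℝ satisfy (τ¹)² = (τ²)² = λ + 2μ and τ¹τ² = λ + 2μ. Then there exist real numbers b₊ ≠ b₋ with b₊·b₋ = 1 (in particular both nonzero) such that each b ∈ {b₊, b₋} is a root of the quadratic equation (λ + μ)b² + 2((λ + 2μ) − μ(ξ¹·ξ²))b + (λ + μ) = 0 and satisfies (τ¹ + bτ²)² = μ·|ξ¹ + bξ²|². Moreover the two covectors (τ¹ + b₊τ², ξ¹ + b₊ξ²)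 and (τ¹ + b₋τ², ξ¹ + b₋ξ²) are linearly independent in ℝ × ℝ³. (Two transversally interacting P-characteristic covectors always produce exactly two independent S-characteristic combinations: part (2) of the lemma on P–P interactions.) -/
/-- Two transversally interacting P-characteristic covectors always produce exactly
two linearly independent S-characteristic combinations. -/
theorem pp_interaction_two_S (lam mu : ℝ) (hmu : 0 < mu) (hlm : 0 < lam + mu)
    (ξ1 ξ2 : Fin 3 → ℝ) (hind : LinearIndependent ℝ ![ξ1, ξ2])
    (hξ1 : dot ξ1 ξ1 = 1) (hξ2 : dot ξ2 ξ2 = 1)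
    (τ1 τ2 : ℝ) (hτ1 : τ1 ^ 2 = lam + 2 * mu) (hτ2 : τ2 ^ 2 = lam + 2 * mu)
    (hτ12 : τ1 * τ2 = lam + 2 * mu) :
    ∃ bp bm : ℝ, bp ≠ bm ∧ bp * bm = 1 ∧
      (∀ b ∈ ({bp, bm} : Set ℝ),
        (lam + mu) * b ^ 2 + 2 * ((lam + 2 * mu) - mu * dot ξ1 ξ2) * b + (lam + mu) = 0 ∧
        (τ1 + b * τ2) ^ 2 = mu * dot (ξ1 + b • ξ2) (ξ1 + b • ξ2)) ∧
      LinearIndependent ℝ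
        ![((τ1 + bp * τ2, ξ1 + bp • ξ2) : ℝ × (Fin 3 → ℝ)),
          ((τ1 + bm * τ2, ξ1 + bm • ξ2) : ℝ × (Fin 3 → ℝ))] := by
  have hind2 := linearIndependent_fin2.mp hind
  simp only [Matrix.cons_val_one, Matrix.head_cons, Matrix.cons_val_zero] at hind2
  obtain ⟨hξ2ne, hnot⟩ := hind2
  have e1 : ξ1 0 * ξ1 0 + ξ1 1 * ξ1 1 + ξ1 2 * ξ1 2 = 1 := by
    simpa [dot, Fin.sum_univ_three] using hξ1
  have e2 : ξ2 0 * ξ2 0 + ξ2 1 * ξ2 1 + ξ2 2 * ξ2 2 = 1 := by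
    simpa [dot, Fin.sum_univ_three] using hξ2
  set s := dot ξ1 ξ2 with hs
  have es : ξ1 0 * ξ2 0 + ξ1 1 * ξ2 1 + ξ1 2 * ξ2 2 = s := by
    simp [hs, dot, Fin.sum_univ_three]
  have hslt : s < 1 := by
    by_contra h
    push_neg at h
    have hq : (ξ1 0 - ξ2 0) ^ 2 + (ξ1 1 - ξ2 1) ^ 2 + (ξ1 2 - ξ2 2) ^ 2 = 2 - 2 * s := by
      linear_combination e1 + e2 - 2 * es
    have n0 := sq_nonneg (ξ1 0 - ξ2 0)
    have n1 := sq_nonneg (ξ1 1 - ξ2 1)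
    have n2 := sq_nonneg (ξ1 2 - ξ2 2)
    have c0 : ξ1 0 - ξ2 0 = 0 :=
      pow_eq_zero_iff two_ne_zero |>.mp (le_antisymm (by linarith) n0)
    have c1 : ξ1 1 - ξ2 1 = 0 :=
      pow_eq_zero_iff two_ne_zero |>.mp (le_antisymm (by linarith) n1)
    have c2 : ξ1 2 - ξ2 2 = 0 :=
      pow_eq_zero_iff two_ne_zero |>.mp (le_antisymm (by linarith) n2)
    have h1 : ξ1 = ξ2 := by
      funext i
      fin_cases i
      · exact sub_eq_zero.mp c0
      · exact sub_eq_zero.mp c1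
      · exact sub_eq_zero.mp c2
    exact hnot 1 (by rw [one_smul, h1])
  set A := lam + mu with hA
  set B := lam + 2 * mu - mu * s with hB
  have hAB : A < B := by
    have h1 : mu * s < mu * 1 := (mul_lt_mul_iff_right₀ hmu).mpr hslt
    rw [hA, hB]; linarith
  have hApos : 0 < A := hlm
  have hBpos : 0 < B := lt_trans hApos hAB
  set D := B ^ 2 - A ^ 2 with hD
  have hDpos : 0 < D := by
    have h1 : 0 < (B - A) * (B + A) := mul_pos (by linarith) (by linarith)
    have h2 : (B - A) * (B + A) = B ^ 2 - A ^ 2 := by ring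
    rw [hD]; linarith
  set r := Real.sqrt D with hr
  have hrsq : r ^ 2 = D := Real.sq_sqrt hDpos.le
  have hrpos : 0 < r := Real.sqrt_pos.mpr hDpos
  set bp := (-B + r) / A with hbp
  set bm := (-B - r) / A with hbm
  have hAne : A ≠ 0 := ne_of_gt hApos
  have hlt : bm < bp := by
    rw [hbp, hbm]
    exact (div_lt_div_iff_of_pos_right hApos).mpr (by linarith)
  have hne : bp ≠ bm := (ne_of_gt hlt).symm.symm
  have hprod : bp * bm = 1 := by
    rw [hbp, hbm, div_mul_div_comm, div_eq_one_iff_eq (by positivity)]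
    linear_combination -hrsq - hD
  have key : ∀ t : ℝ, t ^ 2 = D → A * ((-B + t) / A) ^ 2 + 2 * B * ((-B + t) / A) + A = 0 := by
    intro t ht
    have hrw : A * ((-B + t) / A) ^ 2 + 2 * B * ((-B + t) / A) + A
        = ((-B + t) ^ 2 + 2 * B * (-B + t) + A ^ 2) / A := by
      field_simp
    have hz : (-B + t) ^ 2 + 2 * B * (-B + t) + A ^ 2 = 0 := by
      linear_combination ht + hD
    rw [hrw, hz, zero_div]
  have hrootp : A * bp ^ 2 + 2 * B * bp + A = 0 := by
    rw [hbp]; exact key r hrsq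
  have hrootm : A * bm ^ 2 + 2 * B * bm + A = 0 := by
    rw [hbm, sub_eq_add_neg]; exact key (-r) (by rw [neg_sq]; exact hrsq)
  have hwave : ∀ b : ℝ, A * b ^ 2 + 2 * B * b + A = 0 →
      (τ1 + b * τ2) ^ 2 = mu * dot (ξ1 + b • ξ2) (ξ1 + b • ξ2) := by
    intro b hb
    have hdd : dot (ξ1 + b • ξ2) (ξ1 + b • ξ2) = 1 + 2 * b * s + b ^ 2 := by
      simp only [dot, Fin.sum_univ_three, Pi.add_apply, Pi.smul_apply, smul_eq_mul]
      linear_combination e1 + (2 * b) * es + b ^ 2 * e2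
    rw [hdd]
    rw [hA, hB] at hb
    linear_combination hτ1 + (2 * b) * hτ12 + b ^ 2 * hτ2 + hb
  refine ⟨bp, bm, hne, hprod, ?_, ?_⟩
  · intro b hb
    have hq : A * b ^ 2 + 2 * B * b + A = 0 := by
      rcases hb with h | h <;> subst h
      · exact hrootp
      · exact hrootm
    exact ⟨hq, hwave b hq⟩
  · rw [linearIndependent_fin2]
    simp only [Matrix.cons_val_one, Matrix.head_cons, Matrix.cons_val_zero]
    constructor
    · intro h
      have h2 : ξ1 + bm • ξ2 = 0 := congrArg Prod.snd h
      apply hnot (-bm)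
      exact (neg_smul bm ξ2).trans (eq_neg_of_add_eq_zero_left h2).symm
    · intro a h
      have h2 : a • (ξ1 + bm • ξ2) = ξ1 + bp • ξ2 := congrArg Prod.snd h
      by_cases ha : a = 1
      · subst ha
        rw [one_smul, add_right_inj] at h2
        have h4 : (bm - bp) • ξ2 = 0 := by rw [sub_smul, h2, sub_self]
        rcases smul_eq_zero.mp h4 with h5 | h5
        · exact hne (sub_eq_zero.mp h5).symm
        · exact hξ2ne h5
      · have ha1 : a - 1 ≠ 0 := sub_ne_zero.mpr ha
        have h3 : (a - 1) • ξ1 = (bp - a * bm) • ξ2 := by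
          have h2' : a • ξ1 + (a * bm) • ξ2 = ξ1 + bp • ξ2 := by
            rw [← smul_smul, ← smul_add]; exact h2
          calc (a - 1) • ξ1 = a • ξ1 - ξ1 := by rw [sub_smul, one_smul]
            _ = (ξ1 + bp • ξ2 - (a * bm) • ξ2) - ξ1 := by rw [← h2']; abel
            _ = (bp - a * bm) • ξ2 := by rw [sub_smul]; abel
        apply hnot ((a - 1)⁻¹ * (bp - a * bm))
        rw [mul_smul, ← h3, smul_smul, inv_mul_cancel₀ ha1, one_smul]
end

section
/- Let λ, μ be real numbers with μ > 0 and λ + μ > 0. Let ξ¹, ξ² ∈ ℝ³ be unit vectors, and let τ¹, τ² ∈ ℝ satisfy (τ¹)² = λ + 2μ, (τ²)² = μ, and τ¹τ² = √(μ(λ + 2μ)) (so ζ¹ = (τ¹, ξ¹) is P-characteristic, ζ² = (τ², ξ²) is S-characteristic, and they lie on the same half of the light cone). Then for b ∈ ℝ, the equality (τ¹ + bτ²)² = (λ + 2μ)·|ξ¹ + bξ²|² holds if and only if b = 0 or b = 2(√(μ(λ + 2μ)) − (λ + 2μ)(ξ¹·ξ²))/(λ + μ). (Characterization of the P-characteristic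 combinations arising from a P–S interaction.) -/
/-- Characterization of the P-characteristic combinations arising from a P–S
interaction. -/
theorem ps_interaction_P_characterization (lam mu : ℝ) (hmu : 0 < mu) (hlm : 0 < lam + mu)
    (ξ1 ξ2 : Fin 3 → ℝ) (hξ1 : dot ξ1 ξ1 = 1) (hξ2 : dot ξ2 ξ2 = 1)
    (τ1 τ2 : ℝ) (hτ1 : τ1 ^ 2 = lam + 2 * mu) (hτ2 : τ2 ^ 2 = mu)
    (hτ12 : τ1 * τ2 = Real.sqrt (mu * (lam + 2 * mu))) :
    ∀ b : ℝ,
      (τ1 + b * τ2) ^ 2 = (lam + 2 * mu) * dot (ξ1 + b • ξ2) (ξ1 + b • ξ2) ↔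
      b = 0 ∨
        b = 2 * (Real.sqrt (mu * (lam + 2 * mu)) - (lam + 2 * mu) * dot ξ1 ξ2)
              / (lam + mu) := by
  intro b
  have hd : dot (ξ1 + b • ξ2) (ξ1 + b • ξ2)
      = 1 + 2 * b * dot ξ1 ξ2 + b ^ 2 := by
    have h1 : dot (ξ1 + b • ξ2) (ξ1 + b • ξ2)
        = dot ξ1 ξ1 + 2 * b * dot ξ1 ξ2 + b ^ 2 * dot ξ2 ξ2 := by
      simp only [dot, Pi.add_apply, Pi.smul_apply, smul_eq_mul, Finset.mul_sum,
        ← Finset.sum_add_distrib]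
      exact Finset.sum_congr rfl fun i _ => by ring
    rw [h1, hξ1, hξ2]; ring
  rw [hd]
  set d := dot ξ1 ξ2 with hdd
  set s := Real.sqrt (mu * (lam + 2 * mu)) with hs
  have key : (τ1 + b * τ2) ^ 2 = τ1 ^ 2 + 2 * b * s + b ^ 2 * τ2 ^ 2 := by
    rw [← hτ12]; ring
  rw [key, hτ1, hτ2]
  have hne : lam + mu ≠ 0 := ne_of_gt hlm
  constructor
  · intro h
    have h2 : b * (2 * s - 2 * (lam + 2 * mu) * d - (lam + mu) * b) = 0 := by
      linear_combination h
    rcases mul_eq_zero.1 h2 with h | h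
    · exact Or.inl h
    · right
      field_simp
      linarith
  · rintro (rfl | rfl)
    · ring
    · field_simp
      ring
end

section
/- Let λ, μ be real numbers with μ > 0 and λ + μ > 0. Let ξ¹, ξ² ∈ ℝ³ be unit vectors, and let τ¹, τ² ∈ ℝ satisfy (τ¹)² = λ + 2μ, (τ²)² = μ, and τ¹τ² = √(μ(λ + 2μ)). Then √(μ(λ + 2μ)) − μ(ξ¹·ξ²) > 0, and there is exactly one b ∈ ℝ with (τ¹ + bτ²)² = μ·|ξ¹ + bξ²|², namely b = −(λ + μ)/(2(√(μ(λ + 2μ)) − μ(ξ¹·ξ²))); this b is negative, in particular nonzero. (A P–S interaction produces exactly one S-characteristic combination, and it is a genuinely new covector.) -/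
/-- A P–S interaction produces exactly one S-characteristic combination, and it is
a genuinely new (negative-coefficient) covector. -/
theorem ps_interaction_unique_S (lam mu : ℝ) (hmu : 0 < mu) (hlm : 0 < lam + mu)
    (ξ1 ξ2 : Fin 3 → ℝ) (hξ1 : dot ξ1 ξ1 = 1) (hξ2 : dot ξ2 ξ2 = 1)
    (τ1 τ2 : ℝ) (hτ1 : τ1 ^ 2 = lam + 2 * mu) (hτ2 : τ2 ^ 2 = mu)
    (hτ12 : τ1 * τ2 = Real.sqrt (mu * (lam + 2 * mu))) :
    0 < Real.sqrt (mu * (lam + 2 * mu)) - mu * dot ξ1 ξ2 ∧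
    (-(lam + mu) / (2 * (Real.sqrt (mu * (lam + 2 * mu)) - mu * dot ξ1 ξ2)) < 0) ∧
    ∀ b : ℝ,
      (τ1 + b * τ2) ^ 2 = mu * dot (ξ1 + b • ξ2) (ξ1 + b • ξ2) ↔
      b = -(lam + mu) / (2 * (Real.sqrt (mu * (lam + 2 * mu)) - mu * dot ξ1 ξ2)) := by
  set s := Real.sqrt (mu * (lam + 2 * mu)) with hs
  set d := dot ξ1 ξ2 with hd
  -- Cauchy-Schwarz: d ≤ 1
  have hcs : d ^ 2 ≤ 1 := by
    have h1 : (∑ i, ξ1 i * ξ2 i) ^ 2 ≤ (∑ i, ξ1 i ^ 2) * (∑ i, ξ2 i ^ 2) :=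
      Finset.sum_mul_sq_le_sq_mul_sq _ _ _
    have e1 : (∑ i, ξ1 i ^ 2) = 1 := by
      simpa [dot, sq] using hξ1
    have e2 : (∑ i, ξ2 i ^ 2) = 1 := by
      simpa [dot, sq] using hξ2
    calc d ^ 2 = (∑ i, ξ1 i * ξ2 i) ^ 2 := by rw [hd]; rfl
      _ ≤ (∑ i, ξ1 i ^ 2) * (∑ i, ξ2 i ^ 2) := h1
      _ = 1 := by rw [e1, e2]; ring
  have hdle : d ≤ 1 := by nlinarith [sq_nonneg (d - 1)]
  have hmus : mu < s := by
    have h2 : mu ^ 2 < mu * (lam + 2 * mu) := by nlinarith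
    nlinarith [Real.sq_sqrt (by nlinarith : (0:ℝ) ≤ mu * (lam + 2 * mu)),
      Real.sqrt_nonneg (mu * (lam + 2 * mu))]
  have hpos : 0 < s - mu * d := by nlinarith
  have hneg : -(lam + mu) / (2 * (s - mu * d)) < 0 :=
    div_neg_of_neg_of_pos (by linarith) (by linarith)
  refine ⟨hpos, hneg, fun b => ?_⟩
  have hdot : dot (ξ1 + b • ξ2) (ξ1 + b • ξ2) = 1 + 2 * b * d + b ^ 2 := by
    have : dot (ξ1 + b • ξ2) (ξ1 + b • ξ2)
        = dot ξ1 ξ1 + 2 * b * dot ξ1 ξ2 + b ^ 2 * dot ξ2 ξ2 := by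
      simp only [dot, Pi.add_apply, Pi.smul_apply, smul_eq_mul, Finset.mul_sum, ← Finset.sum_add_distrib]
      apply Finset.sum_congr rfl
      intro i _
      ring
    rw [this, hξ1, hξ2, ← hd]; ring
  rw [hdot]
  constructor
  · intro h
    have hlhs : (τ1 + b * τ2) ^ 2 = (lam + 2 * mu) + 2 * b * s + b ^ 2 * mu := by
      have e : (τ1 + b * τ2) ^ 2 = τ1 ^ 2 + 2 * b * (τ1 * τ2) + b ^ 2 * τ2 ^ 2 := by ring
      rw [e, hτ1, hτ2, hτ12]
    have : (lam + mu) + 2 * b * (s - mu * d) = 0 := by nlinarith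
    field_simp
    linarith [this]
  · intro h
    have hb : b * (2 * (s - mu * d)) = -(lam + mu) := by
      rw [h]; field_simp
    have e : (τ1 + b * τ2) ^ 2 = τ1 ^ 2 + 2 * b * (τ1 * τ2) + b ^ 2 * τ2 ^ 2 := by ring
    rw [e, hτ1, hτ2, hτ12]
    nlinarith [hb]
end

section
/- Let λ, μ be real numbers with μ > 0 and λ + μ > 0. Let ξ¹, ξ² ∈ ℝ³ be linearly independent unit vectors satisfying the interaction condition ξ¹·ξ² < −λ/(λ + 2μ), and let τ¹, τ² ∈ ℝ satisfy (τ¹)² = (τ²)² = μ and τ¹τ² = μ. Then there exist real numbers b₊ ≠ b₋ with b₊·b₋ = 1 (in particular both nonzero) such that each b ∈ {b₊, b₋} is a root of the quadratic equation (λ + μ)b² + 2((λ + 2μ)(ξ¹·ξ²) − μ)b + (λ + μ) = 0 and satisfies (τ¹ + bτ²)² = (λ + 2μ)·|ξ¹ + bξ²|². Moreover the two covectors (τ¹ + b₊τ², ξ¹ + b₊ξ²) and (τ¹ + b₋τ², ξ¹ + b₋ξ²) are linearly independent in ℝ × ℝ³. (Under the interaction condition, two S-characteristic covectors produce two independent P-characteristic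 combinations: part (2) of the lemma on S–S interactions.) -/
lemma dot_expand (x y : Fin 3 → ℝ) (b : ℝ) :
    dot (x + b • y) (x + b • y) = dot x x + 2 * b * dot x y + b ^ 2 * dot y y := by
  simp only [dot, Pi.add_apply, Pi.smul_apply, smul_eq_mul, Fin.sum_univ_three]
  ring

/-- Under the interaction condition, two S-characteristic covectors produce two
linearly independent P-characteristic combinations. -/
theorem ss_interaction_two_P (lam mu : ℝ) (hmu : 0 < mu) (hlm : 0 < lam + mu)
    (ξ1 ξ2 : Fin 3 → ℝ) (hind : LinearIndependent ℝ ![ξ1, ξ2])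
    (hξ1 : dot ξ1 ξ1 = 1) (hξ2 : dot ξ2 ξ2 = 1)
    (hint : dot ξ1 ξ2 < -lam / (lam + 2 * mu))
    (τ1 τ2 : ℝ) (hτ1 : τ1 ^ 2 = mu) (hτ2 : τ2 ^ 2 = mu)
    (hτ12 : τ1 * τ2 = mu) :
    ∃ bp bm : ℝ, bp ≠ bm ∧ bp * bm = 1 ∧
      (∀ b ∈ ({bp, bm} : Set ℝ),
        (lam + mu) * b ^ 2 + 2 * ((lam + 2 * mu) * dot ξ1 ξ2 - mu) * b + (lam + mu) = 0 ∧
        (τ1 + b * τ2) ^ 2 = (lam + 2 * mu) * dot (ξ1 + b • ξ2) (ξ1 + b • ξ2)) ∧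
      LinearIndependent ℝ
        ![((τ1 + bp * τ2, ξ1 + bp • ξ2) : ℝ × (Fin 3 → ℝ)),
          ((τ1 + bm * τ2, ξ1 + bm • ξ2) : ℝ × (Fin 3 → ℝ))] := by
  set s := dot ξ1 ξ2 with hs
  set A := lam + mu with hA
  set c := (lam + 2 * mu) * s - mu with hcdef
  have h2mu : 0 < lam + 2 * mu := by linarith
  have hc : c < -A := by
    have h1 : s * (lam + 2 * mu) < -lam := (lt_div_iff₀ h2mu).mp hint
    simp only [hcdef, hA]; nlinarith
  have hD : 0 < c ^ 2 - A ^ 2 := by nlinarith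
  set d := Real.sqrt (c ^ 2 - A ^ 2) with hd
  have hdpos : 0 < d := Real.sqrt_pos.mpr hD
  have hd2 : d ^ 2 = c ^ 2 - A ^ 2 := Real.sq_sqrt hD.le
  have hAne : A ≠ 0 := ne_of_gt hlm
  clear_value d
  have hne : (-c + d) / A ≠ (-c - d) / A := by
    intro h
    rw [div_eq_div_iff hAne hAne] at h
    have : d = 0 := by nlinarith
    linarith
  have hqp : A * ((-c + d) / A) ^ 2 + 2 * c * ((-c + d) / A) + A = 0 := by
    have h : A * ((-c + d) / A) ^ 2 + 2 * c * ((-c + d) / A) + A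
        = (d ^ 2 - (c ^ 2 - A ^ 2)) / A := by field_simp; ring
    rw [h, hd2]; simp
  have hqm : A * ((-c - d) / A) ^ 2 + 2 * c * ((-c - d) / A) + A = 0 := by
    have h : A * ((-c - d) / A) ^ 2 + 2 * c * ((-c - d) / A) + A
        = (d ^ 2 - (c ^ 2 - A ^ 2)) / A := by field_simp; ring
    rw [h, hd2]; simp
  refine ⟨(-c + d) / A, (-c - d) / A, hne, ?_, ?_, ?_⟩
  · rw [div_mul_div_comm, div_eq_one_iff_eq (by positivity)]
    nlinarith [hd2]
  · have key : ∀ b : ℝ, A * b ^ 2 + 2 * c * b + A = 0 →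
        (lam + mu) * b ^ 2 + 2 * ((lam + 2 * mu) * s - mu) * b + (lam + mu) = 0 ∧
        (τ1 + b * τ2) ^ 2 = (lam + 2 * mu) * dot (ξ1 + b • ξ2) (ξ1 + b • ξ2) := by
      intro b hq
      constructor
      · rw [hA, hcdef] at hq; linarith
      · rw [dot_expand, hξ1, hξ2, ← hs]
        rw [hA, hcdef] at hq
        linear_combination hτ1 + b ^ 2 * hτ2 + 2 * b * hτ12 - hq
    rintro b (rfl | rfl)
    · exact key _ hqp
    · exact key _ hqm
  · set bp := (-c + d) / A with hbp
    set bm := (-c - d) / A with hbm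
    clear_value bp bm
    have hbne : bp ≠ bm := hne
    rw [LinearIndependent.pair_iff]
    intro u v huv
    have h2 : u • (ξ1 + bp • ξ2) + v • (ξ1 + bm • ξ2) = 0 := by
      have h := congrArg Prod.snd huv
      simpa using h
    have h3 : (u + v) • ξ1 + (u * bp + v * bm) • ξ2 = 0 := by
      rw [← h2]; module
    obtain ⟨e1, e2⟩ := LinearIndependent.pair_iff.mp hind _ _ h3
    have hu : u = 0 := by
      have : u * (bp - bm) = 0 := by linear_combination e2 - bm * e1
      rcases mul_eq_zero.mp this with h | h
      · exact h
      · exact absurd (by linarith : bp = bm) hbne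
    exact ⟨hu, by linarith⟩
end

section
/- Let λ, μ be real numbers with μ > 0 and λ + μ > 0. Let ξ¹, ξ² ∈ ℝ³ be unit vectors with −λ/(λ + 2μ) < ξ¹·ξ² < 1, and let τ¹, τ² ∈ ℝ satisfy (τ¹)² = (τ²)² = μ and τ¹τ² = μ. Then there is no b ∈ ℝ with (τ¹ + bτ²)² = (λ + 2μ)·|ξ¹ + bξ²|². (When the interaction condition fails, the S–S interaction produces no P-characteristic combination; this is the algebraic reason why the nonlinear response u^{SSP} is smooth unless the interaction condition holds.) -/
/-- When the interaction condition fails, the S–S interaction produces no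
P-characteristic combination. -/
theorem ss_interaction_no_P_when_condition_fails (lam mu : ℝ)
    (hmu : 0 < mu) (hlm : 0 < lam + mu)
    (ξ1 ξ2 : Fin 3 → ℝ) (hξ1 : dot ξ1 ξ1 = 1) (hξ2 : dot ξ2 ξ2 = 1)
    (hlow : -lam / (lam + 2 * mu) < dot ξ1 ξ2) (hhigh : dot ξ1 ξ2 < 1)
    (τ1 τ2 : ℝ) (hτ1 : τ1 ^ 2 = mu) (hτ2 : τ2 ^ 2 = mu)
    (hτ12 : τ1 * τ2 = mu) :
    ¬ ∃ b : ℝ,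
      (τ1 + b * τ2) ^ 2 = (lam + 2 * mu) * dot (ξ1 + b • ξ2) (ξ1 + b • ξ2) := by
  rintro ⟨b, hb⟩
  set κ := dot ξ1 ξ2 with hκ
  have hl2m : 0 < lam + 2 * mu := by linarith
  have hτ1ne : τ1 ≠ 0 := by
    intro h; rw [h] at hτ1; simp at hτ1; linarith
  have hτeq : τ2 = τ1 := by
    have : τ1 * (τ2 - τ1) = 0 := by nlinarith
    rcases mul_eq_zero.mp this with h | h
    · exact absurd h hτ1ne
    · linarith
  have hlow' : -lam < (lam + 2 * mu) * κ := by
    have := (div_lt_iff₀ hl2m).mp hlow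
    linarith
  rw [dot_expand, hξ1, hξ2, hτeq] at hb
  have hb' : mu * (1 + b) ^ 2 = (lam + 2 * mu) * (1 + 2 * b * κ + b ^ 2) := by
    nlinarith [hb]
  nlinarith [sq_nonneg ((lam + mu) * b + ((lam + 2 * mu) * κ - mu)),
    mul_pos hlm hlm, sq_nonneg b,
    mul_lt_mul_of_pos_left hhigh hl2m]
end

section
/- Let λ, μ, A, B, C be real numbers, let ξ¹, ξ² ∈ ℝ³ be linearly independent, let g = g(ξ¹, ξ²) be the P–P interaction symbol matrix, and let ξ = ξ¹ + ξ². Let ξ^H ∈ ℝ³ be a unit vector lying in the plane spanned by ξ¹ and ξ² with ξ^H·ξ = 0 and ξ^H·ξ² ≥ 0. Define the angles α = arccos((ξ¹·ξ²)/(|ξ¹||ξ²|)) and ψ = arccos((ξ·ξ²)/(|ξ||ξ²|)). Then ξ^H·(g ξ) = (λ + 3μ + A + 2B)·|ξ¹|²·|ξ²|²·|ξ|·cos α·sin(2ψ − α). (The in-plane S-wave component of the symbol generated by the interaction of two P waves; it is generically nonvanishing exactly when λ + 3μ + A + 2B ≠ 0.) -/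
set_option maxHeartbeats 1000000

open Real

/-- Euclidean norm on ℝ³. -/
noncomputable def nrm (x : Fin 3 → ℝ) : ℝ := Real.sqrt (dot x x)

/-- The P–P interaction symbol matrix. -/
def gPP (lam mu A B C : ℝ) (ξ1 ξ2 : Fin 3 → ℝ) : Matrix (Fin 3) (Fin 3) ℝ :=
  fun m n =>
    (lam + 2 * B) *
        (dot ξ1 ξ1 * ξ2 m * ξ2 n + dot ξ2 ξ2 * ξ1 m * ξ1 n
          + (dot ξ1 ξ2) ^ 2 * (if m = n then 1 else 0))
      + (A + 3 * mu) * dot ξ1 ξ2 * (ξ1 m * ξ2 n + ξ2 m * ξ1 n)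
      + 2 * C * dot ξ1 ξ1 * dot ξ2 ξ2 * (if m = n then 1 else 0)

lemma dot_comm' (x y : Fin 3 → ℝ) : dot x y = dot y x := by
  simp [dot, Fin.sum_univ_three]; ring

lemma dot_add_right' (x y z : Fin 3 → ℝ) : dot x (y + z) = dot x y + dot x z := by
  simp [dot, Fin.sum_univ_three]; ring

lemma dot_self_pos (x : Fin 3 → ℝ) (hx : x ≠ 0) : 0 < dot x x := by
  have h0 : dot x x = x 0 ^ 2 + x 1 ^ 2 + x 2 ^ 2 := by
    simp [dot, Fin.sum_univ_three]; ring
  rcases lt_or_eq_of_le (show (0:ℝ) ≤ dot x x by rw [h0]; positivity) with h | h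
  · exact h
  · exfalso; apply hx
    have h1 : x 0 = 0 ∧ x 1 = 0 ∧ x 2 = 0 := by
      constructor
      · nlinarith [sq_nonneg (x 0), sq_nonneg (x 1), sq_nonneg (x 2)]
      constructor
      · nlinarith [sq_nonneg (x 0), sq_nonneg (x 1), sq_nonneg (x 2)]
      · nlinarith [sq_nonneg (x 0), sq_nonneg (x 1), sq_nonneg (x 2)]
    funext i; fin_cases i
    · exact h1.1
    · exact h1.2.1
    · exact h1.2.2

lemma mulVec_gPP (lam mu A B C : ℝ) (a b x : Fin 3 → ℝ) (m : Fin 3) :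
    ((gPP lam mu A B C a b).mulVec x) m =
      (lam + 2*B) * (dot a a * dot b x * b m + dot b b * dot a x * a m
          + (dot a b)^2 * x m)
        + (A + 3*mu) * dot a b * (dot b x * a m + dot a x * b m)
        + 2*C * dot a a * dot b b * x m := by
  rw [show dot b x = ∑ n, b n * x n from by simp [dot],
      show dot a x = ∑ n, a n * x n from by simp [dot]]
  simp only [Matrix.mulVec, dotProduct, gPP, Fin.sum_univ_three]
  fin_cases m <;> simp only [Fin.reduceFinMk] <;> norm_num [Fin.ext_iff] <;> ring

lemma dot_gPP (lam mu A B C : ℝ) (a b x h : Fin 3 → ℝ) :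
    dot h ((gPP lam mu A B C a b).mulVec x) =
      (lam + 2*B) * (dot a a * dot b x * dot h b + dot b b * dot a x * dot h a
          + (dot a b)^2 * dot h x)
        + (A + 3*mu) * dot a b * (dot b x * dot h a + dot a x * dot h b)
        + 2*C * dot a a * dot b b * dot h x := by
  rw [show dot h b = ∑ n, h n * b n from by simp [dot],
      show dot h a = ∑ n, h n * a n from by simp [dot],
      show dot h x = ∑ n, h n * x n from by simp [dot]]
  simp only [dot, Fin.sum_univ_three, mulVec_gPP]
  ring

lemma lhs_eval (lam mu A B C : ℝ) (a b h : Fin 3 → ℝ) (hperp : dot h (a+b) = 0) :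
    dot h ((gPP lam mu A B C a b).mulVec (a+b)) =
      (lam + 3*mu + A + 2*B) * (dot h b) * (dot a b) * (dot a a - dot b b) := by
  rw [dot_gPP]
  rw [dot_add_right', dot_add_right', dot_add_right', dot_comm' b a] at *
  linear_combination ((lam+2*B)*(dot b b*(dot a a + dot a b) + (dot a b)^2)
    + (A+3*mu)*(dot a b)*(dot a b + dot b b)
    + 2*C*(dot a a)*(dot b b)) * hperp

lemma key_lemma (a b h : Fin 3 → ℝ) (p q : ℝ) (hpq : p • a + q • b = h)
    (hunit : dot h h = 1) (hperp : dot h (a + b) = 0) :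
    dot (a + b) (a + b) * (dot h b) ^ 2 = dot a a * dot b b - (dot a b) ^ 2 := by
  subst hpq
  simp only [dot, Fin.sum_univ_three, Pi.add_apply, Pi.smul_apply, smul_eq_mul] at hunit hperp ⊢
  linear_combination ((a 0*a 0+a 1*a 1+a 2*a 2)*(b 0*b 0+b 1*b 1+b 2*b 2)
      - (a 0*b 0+a 1*b 1+a 2*b 2)^2) * hunit
    + ((2*(a 0*b 0+a 1*b 1+a 2*b 2) + (b 0*b 0+b 1*b 1+b 2*b 2))
        * (p*(a 0*b 0+a 1*b 1+a 2*b 2) + q*(b 0*b 0+b 1*b 1+b 2*b 2))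
      - (b 0*b 0+b 1*b 1+b 2*b 2)
        * (p*(a 0*a 0+a 1*a 1+a 2*a 2) + q*(a 0*b 0+a 1*b 1+a 2*b 2))) * hperp

/-- The in-plane S-wave component of the symbol generated by the interaction of
two P waves. -/
theorem pp_interaction_SH_symbol (lam mu A B C : ℝ) (ξ1 ξ2 : Fin 3 → ℝ)
    (hind : LinearIndependent ℝ ![ξ1, ξ2]) (ξH : Fin 3 → ℝ)
    (hHunit : dot ξH ξH = 1)
    (hHspan : ξH ∈ Submodule.span ℝ ({ξ1, ξ2} : Set (Fin 3 → ℝ)))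
    (hHperp : dot ξH (ξ1 + ξ2) = 0) (hHpos : 0 ≤ dot ξH ξ2) :
    dot ξH ((gPP lam mu A B C ξ1 ξ2).mulVec (ξ1 + ξ2)) =
      (lam + 3 * mu + A + 2 * B) * dot ξ1 ξ1 * dot ξ2 ξ2 * nrm (ξ1 + ξ2)
        * Real.cos (Real.arccos (dot ξ1 ξ2 / (nrm ξ1 * nrm ξ2)))
        * Real.sin (2 * Real.arccos (dot (ξ1 + ξ2) ξ2 / (nrm (ξ1 + ξ2) * nrm ξ2))
            - Real.arccos (dot ξ1 ξ2 / (nrm ξ1 * nrm ξ2))) := by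
  rw [LinearIndependent.pair_iff] at hind
  have ha0 : ξ1 ≠ 0 := by
    intro e; have := hind 1 0 (by simp [e]); simp at this
  have hb0 : ξ2 ≠ 0 := by
    intro e; have := hind 0 1 (by simp [e]); simp at this
  have hx0 : ξ1 + ξ2 ≠ 0 := by
    intro e; have := hind 1 1 (by simpa using e); simp at this
  have hA := dot_self_pos ξ1 ha0
  have hB := dot_self_pos ξ2 hb0
  have hX := dot_self_pos _ hx0
  obtain ⟨p, q, hpq⟩ := Submodule.mem_span_pair.mp hHspan
  have key := key_lemma ξ1 ξ2 ξH p q hpq hHunit hHperp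
  set s := dot ξH ξ2 with hs
  set na := nrm ξ1 with hna'
  set nb := nrm ξ2 with hnb'
  set nx := nrm (ξ1 + ξ2) with hnx'
  have hna : na ^ 2 = dot ξ1 ξ1 := Real.sq_sqrt hA.le
  have hnb : nb ^ 2 = dot ξ2 ξ2 := Real.sq_sqrt hB.le
  have hnx : nx ^ 2 = dot (ξ1+ξ2) (ξ1+ξ2) := Real.sq_sqrt hX.le
  have hnap : 0 < na := Real.sqrt_pos.mpr hA
  have hnbp : 0 < nb := Real.sqrt_pos.mpr hB
  have hnxp : 0 < nx := Real.sqrt_pos.mpr hX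
  -- expansion relations
  have hexp : dot (ξ1+ξ2) (ξ1+ξ2) = dot ξ1 ξ1 + 2 * dot ξ1 ξ2 + dot ξ2 ξ2 := by
    rw [dot_add_right', dot_comm' (ξ1+ξ2) ξ1, dot_add_right', dot_comm' (ξ1+ξ2) ξ2,
      dot_add_right', dot_comm' ξ2 ξ1]
    ring
  have hxb : dot (ξ1+ξ2) ξ2 = dot ξ1 ξ2 + dot ξ2 ξ2 := by
    rw [dot_comm' (ξ1+ξ2) ξ2, dot_add_right', dot_comm' ξ2 ξ1, dot_comm' ξ2 ξ2]
  -- key in norm form : nx^2 * s^2 = na^2*nb^2 - M^2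
  have key2 : nx ^ 2 * s ^ 2 = na ^ 2 * nb ^ 2 - (dot ξ1 ξ2) ^ 2 := by
    rw [hna, hnb, hnx]; exact key
  have hM : dot ξ1 ξ2 = (nx ^ 2 - na ^ 2 - nb ^ 2) / 2 := by
    rw [hna, hnb, hnx, hexp]; ring
  -- bounds for arccos
  have hca1 : -1 ≤ dot ξ1 ξ2 / (na * nb) ∧ dot ξ1 ξ2 / (na * nb) ≤ 1 := by
    have hsq : (dot ξ1 ξ2 / (na * nb)) ^ 2 ≤ 1 := by
      rw [div_pow, div_le_one (by positivity)]
      nlinarith [sq_nonneg (nx * s)]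
    exact abs_le.mp ((sq_le_one_iff_abs_le_one _).mp hsq)
  have hcp1 : -1 ≤ dot (ξ1+ξ2) ξ2 / (nx * nb) ∧ dot (ξ1+ξ2) ξ2 / (nx * nb) ≤ 1 := by
    have hsq : (dot (ξ1+ξ2) ξ2 / (nx * nb)) ^ 2 ≤ 1 := by
      rw [div_pow, div_le_one (by positivity)]
      rw [hxb, hM]
      nlinarith [sq_nonneg (nx * s), key2, hM]
    exact abs_le.mp ((sq_le_one_iff_abs_le_one _).mp hsq)
  -- sqrt evaluations
  have e1 : Real.sqrt (1 - (dot ξ1 ξ2 / (na * nb)) ^ 2) = nx * s / (na * nb) := by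
    rw [show (1:ℝ) - (dot ξ1 ξ2 / (na * nb)) ^ 2 = (nx * s / (na * nb)) ^ 2 by
      field_simp; linear_combination -key2]
    exact Real.sqrt_sq (div_nonneg (mul_nonneg hnxp.le hHpos) (by positivity))
  have key3 := key2
  rw [hM] at key3
  have e2 : Real.sqrt (1 - (dot (ξ1+ξ2) ξ2 / (nx * nb)) ^ 2) = s / nb := by
    rw [show (1:ℝ) - (dot (ξ1+ξ2) ξ2 / (nx * nb)) ^ 2 = (s / nb) ^ 2 by
      rw [hxb, hM, ← hnb]; field_simp; linear_combination (-4) * key3]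
    exact Real.sqrt_sq (div_nonneg hHpos hnbp.le)
  rw [lhs_eval _ _ _ _ _ _ _ _ hHperp, Real.sin_sub, Real.sin_two_mul, Real.cos_two_mul,
    Real.cos_arccos hca1.1 hca1.2, Real.cos_arccos hcp1.1 hcp1.2,
    Real.sin_arccos, Real.sin_arccos, e1, e2, hxb, hM, ← hna, ← hnb]
  field_simp
  ring
end
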